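/- Let (Ω, F, P) be a probability space, S a standard Borel space, (E, ℰ) a countably generated measurable space, θ : Ω → S and Y : Ω → E measurable maps, π the distribution of θ, λ a σ-finite measure on E, and ψ : S × E → [0,∞) a bounded jointly measurable function such that the joint distribution of (θ, Y) has density ψ with respect to π ⊗ λ, and such that Z(ω) := ∫_S ψ(z, Y(ω)) π(dz) > 0 for P-almost every ω. Then a regular version κ of the conditional distribution of θ given Y satisfies: for P-almost every ω and every measurable A ⊆ S, κ(ω, A) = (∫_A ψ(z, Y(ω)) π(dz)) / Z(ω). In other words, the posterior distribution of θ given the observation Y is absolutely continuous with respect to the prior π with density ψ(·, Y)/π(ψ(·, Y)). -/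

import Mathlib

open MeasureTheory ProbabilityTheory
open scoped ENNReal

/-- Measure-valued Bayes update: if the joint law of `(θ, Y)` has bounded density `ψ` with
respect to `π ⊗ λ` (`π` the prior law of `θ`) and the normalizer is a.s. positive, then the
regular conditional distribution of `θ` given `Y` is, almost surely, absolutely continuous
with respect to `π` with density `ψ(·, Y) / π(ψ(·, Y))`. -/
theorem posterior_distribution_bayes
    {Ω S E : Type*} [m0 : MeasurableSpace Ω]
    [MeasurableSpace S] [StandardBorelSpace S] [Nonempty S]
    [mE : MeasurableSpace E] [MeasurableSpace.CountablyGenerated E]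
    {μ : Measure Ω} [IsProbabilityMeasure μ]
    (θ : Ω → S) (Y : Ω → E) (hθ : Measurable θ) (hY : Measurable Y)
    (lam : Measure E) [SigmaFinite lam]
    (ψ : S → E → ℝ)
    (hψmeas : Measurable (Function.uncurry ψ))
    (hψnonneg : ∀ z y, 0 ≤ ψ z y)
    (hψbdd : ∃ C : ℝ, ∀ z y, ψ z y ≤ C)
    (hdensity : ∀ C : Set (S × E), MeasurableSet C →
      μ ((fun ω => (θ ω, Y ω)) ⁻¹' C)
        = ∫⁻ p in C, ENNReal.ofReal (ψ p.1 p.2) ∂((μ.map θ).prod lam))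
    (hpos : ∀ᵐ ω ∂μ, 0 < ∫ z, ψ z (Y ω) ∂(μ.map θ)) :
    ∀ᵐ ω ∂μ, ∀ A : Set S, MeasurableSet A →
      condDistrib θ Y μ (Y ω) A
        = (∫⁻ z in A, ENNReal.ofReal (ψ z (Y ω)) ∂(μ.map θ))
            / ∫⁻ z, ENNReal.ofReal (ψ z (Y ω)) ∂(μ.map θ) := by
  set π : Measure S := μ.map θ with hπdef
  have hπ : IsProbabilityMeasure π := Measure.isProbabilityMeasure_map hθ.aemeasurable
  obtain ⟨C, hC⟩ := hψbdd
  -- the density as an ℝ≥0∞-valued function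
  set f : S → E → ℝ≥0∞ := fun z y => ENNReal.ofReal (ψ z y) with hfdef
  have hfmeas : Measurable (fun p : S × E => f p.1 p.2) :=
    ENNReal.measurable_ofReal.comp hψmeas
  have hfmeas' : Measurable (fun p : E × S => f p.2 p.1) :=
    hfmeas.comp measurable_swap
  have hfy : ∀ y : E, Measurable (fun z => f z y) := fun y =>
    hfmeas.comp (measurable_id.prodMk measurable_const)
  -- the normalizer
  set Z : E → ℝ≥0∞ := fun y => ∫⁻ z, f z y ∂π with hZdef
  have hZmeas : Measurable Z := Measurable.lintegral_prod_right' hfmeas'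
  have hZtop : ∀ y, Z y ≠ ∞ := by
    intro y
    have : Z y ≤ ENNReal.ofReal C := by
      calc Z y ≤ ∫⁻ _, ENNReal.ofReal C ∂π :=
            lintegral_mono fun z => ENNReal.ofReal_le_ofReal (hC z y)
        _ = ENNReal.ofReal C := by simp
    exact (lt_of_le_of_lt this ENNReal.ofReal_lt_top).ne
  -- the candidate kernel
  have hνmeas : Measurable (fun y : E => (Z y)⁻¹ • (π.withDensity fun z => f z y)) := by
    apply Measure.measurable_of_measurable_coe
    intro s hs
    simp only [Measure.smul_apply, smul_eq_mul]
    have h1 : ∀ y, (π.withDensity fun z => f z y) s = ∫⁻ z in s, f z y ∂π := fun y =>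
      withDensity_apply _ hs
    simp_rw [h1]
    exact hZmeas.inv.mul (Measurable.lintegral_prod_right' (ν := π.restrict s) hfmeas')
  set κ : Kernel E S := ⟨fun y => (Z y)⁻¹ • (π.withDensity fun z => f z y), hνmeas⟩ with hκdef
  have hκ_apply : ∀ y s, MeasurableSet s → κ y s = (Z y)⁻¹ * ∫⁻ z in s, f z y ∂π := by
    intro y s hs
    simp only [hκdef, Kernel.coe_mk, Measure.smul_apply, smul_eq_mul, withDensity_apply _ hs]
  have hκfin : IsFiniteKernel κ := by
    refine ⟨⟨1, ENNReal.one_lt_top, fun y => ?_⟩⟩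
    rw [hκ_apply y Set.univ MeasurableSet.univ, Measure.restrict_univ]
    have hZy : ∫⁻ z, f z y ∂π = Z y := rfl
    rw [hZy]
    rcases eq_or_ne (Z y) 0 with h0 | h0
    · simp [h0]
    · rw [ENNReal.inv_mul_cancel h0 (hZtop y)]
  -- key pointwise identity
  have hkey : ∀ y (I : ℝ≥0∞), I ≤ Z y → Z y * ((Z y)⁻¹ * I) = I := by
    intro y I hI
    rcases eq_or_ne (Z y) 0 with h0 | h0
    · have : I = 0 := le_antisymm (h0 ▸ hI) zero_le
      simp [h0, this]
    · rw [← mul_assoc, ENNReal.mul_inv_cancel h0 (hZtop y), one_mul]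
  -- the marginal law of Y
  have hmapY : μ.map Y = lam.withDensity Z := by
    ext B hB
    rw [Measure.map_apply hY hB, withDensity_apply _ hB]
    have hpre : Y ⁻¹' B = (fun ω => (θ ω, Y ω)) ⁻¹' (Set.univ ×ˢ B) := by
      ext ω; simp
    rw [hpre, hdensity _ (MeasurableSet.univ.prod hB)]
    rw [← Measure.prod_restrict, Measure.restrict_univ]
    rw [MeasureTheory.lintegral_prod _ hfmeas.aemeasurable,
      lintegral_lintegral_swap (by exact hfmeas.aemeasurable)]
  -- the compProd identity
  have hcomp : μ.map (fun ω => (Y ω, θ ω)) = (μ.map Y) ⊗ₘ κ := by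
    ext s hs
    have hswap : MeasurableSet (Prod.swap ⁻¹' s : Set (S × E)) := measurable_swap hs
    rw [Measure.map_apply (hY.prodMk hθ) hs]
    have hpre : (fun ω => (Y ω, θ ω)) ⁻¹' s = (fun ω => (θ ω, Y ω)) ⁻¹' (Prod.swap ⁻¹' s) := by
      ext ω; simp
    rw [hpre, hdensity _ hswap]
    have hLHS : ∫⁻ p in Prod.swap ⁻¹' s, f p.1 p.2 ∂(π.prod lam)
        = ∫⁻ p in s, f p.2 p.1 ∂(lam.prod π) := by
      have hsw : (lam.prod π) = Measure.map Prod.swap (π.prod lam) := Measure.prod_swap.symm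
      rw [hsw, setLIntegral_map hs hfmeas' measurable_swap]
      rfl
    rw [hLHS]
    have hRHS : (μ.map Y ⊗ₘ κ) s = ∫⁻ y, Z y * κ y (Prod.mk y ⁻¹' s) ∂lam := by
      rw [Measure.compProd_apply hs, hmapY,
        lintegral_withDensity_eq_lintegral_mul _ hZmeas
          (Kernel.measurable_kernel_prodMk_left hs)]
      rfl
    rw [hRHS]
    have hsec : ∀ y, MeasurableSet (Prod.mk y ⁻¹' s : Set S) := fun y =>
      measurable_prodMk_left hs
    have hLHS2 : ∫⁻ p in s, f p.2 p.1 ∂(lam.prod π)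
        = ∫⁻ y, ∫⁻ z in Prod.mk y ⁻¹' s, f z y ∂π ∂lam := by
      rw [← lintegral_indicator hs, MeasureTheory.lintegral_prod _
        (hfmeas'.indicator hs).aemeasurable]
      refine lintegral_congr fun y => ?_
      rw [← lintegral_indicator (hsec y)]
      exact lintegral_congr fun z => rfl
    rw [hLHS2]
    refine lintegral_congr fun y => ?_
    rw [hκ_apply y _ (hsec y), hkey y _ (setLIntegral_le_lintegral _ _)]
  -- uniqueness of the conditional distribution
  have hae : ∀ᵐ y ∂μ.map Y, κ y = condDistrib θ Y μ y :=
    (condDistrib_ae_eq_of_measure_eq_compProd_of_measurable hY hθ hcomp).mono fun y h => h.symm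
  have hae' : ∀ᵐ ω ∂μ, κ (Y ω) = condDistrib θ Y μ (Y ω) :=
    ae_of_ae_map hY.aemeasurable hae
  filter_upwards [hae', hpos] with ω hκω hposω
  intro A hA
  have hZne : Z (Y ω) ≠ 0 := by
    intro h0
    have hzero : (fun z => f z (Y ω)) =ᵐ[π] 0 :=
      (lintegral_eq_zero_iff (hfy (Y ω))).mp h0
    have hzero' : (fun z => ψ z (Y ω)) =ᵐ[π] 0 := by
      filter_upwards [hzero] with z hz
      have : ENNReal.ofReal (ψ z (Y ω)) = 0 := hz
      have h1 : ψ z (Y ω) ≤ 0 := by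
        by_contra h
        exact (ENNReal.ofReal_pos.mpr (lt_of_not_ge h)).ne' this
      exact le_antisymm h1 (hψnonneg z (Y ω))
    have : ∫ z, ψ z (Y ω) ∂π = 0 := by
      rw [integral_congr_ae hzero']; simp
    exact absurd this (ne_of_gt hposω)
  rw [← hκω, hκ_apply _ _ hA, ENNReal.div_eq_inv_mul]
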